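/- arXiv:2203.01550 — 2 statements merged into one kernel-verified Lean document; each statement's English description precedes it below -/
import Mathlib

section
/- For every H ⊆ [p]^n and i ∈ [n], shifting in direction i does not increase the exponential dimension: d_E(S_i(H)) ≤ d_E(H). -/
open Finset

/-- The edge of the one-inclusion graph of `H ⊆ [p]^n` in direction `i` through `g`:
all members of `H` agreeing with `g` off coordinate `i`. -/
def edgeF {n p : ℕ} (H : Finset (Fin n → Fin p)) (i : Fin n) (g : Fin n → Fin p) :
    Finset (Fin n → Fin p) :=
  H.filter (fun h => ∀ j, j ≠ i → h j = g j)

/-- The shifting operator in direction `i`: each edge is pushed downward, i.e. replaced by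
the words agreeing with its pattern off `i` whose `i`-th coordinate is among the
`|e|` smallest values. -/
def shift {n p : ℕ} (i : Fin n) (H : Finset (Fin n → Fin p)) : Finset (Fin n → Fin p) :=
  Finset.univ.filter (fun g => (g i).val < (edgeF H i g).card)

/-- The projection of `H` to a sequence `S` of coordinates. -/
def projF {n p k : ℕ} (H : Finset (Fin n → Fin p)) (S : Fin k → Fin n) :
    Finset (Fin k → Fin p) :=
  H.image (fun h => fun j => h (S j))

/-- `H` E-shatters size `k` if some sequence of `k` coordinates has projection of size `≥ 2^k`. -/
def EShatters {n p : ℕ} (H : Finset (Fin n → Fin p)) (k : ℕ) : Prop :=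
  ∃ S : Fin k → Fin n, 2 ^ k ≤ (projF H S).card

/-- The exponential dimension: the largest `k` that `H` E-shatters. -/
noncomputable def dE {n p : ℕ} (H : Finset (Fin n → Fin p)) : ℕ :=
  sSup {k | EShatters H k}

/-- The number of edges of the one-inclusion graph of `H` in direction `j`
(equivalently, the number of distinct patterns of `H` off coordinate `j`). -/
def numEdges {n p : ℕ} (H : Finset (Fin n → Fin p)) (j : Fin n) : ℕ :=
  (H.image (fun h => fun k : {k : Fin n // k ≠ j} => h k.1)).card

/-- `avd'(H) = (1/|H|) Σ_{e ∈ E} (|e| − 1)`, over all edges including singletons. -/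
def avd' {n p : ℕ} (H : Finset (Fin n → Fin p)) : ℚ :=
  (∑ j : Fin n, ((H.card : ℚ) - (numEdges H j : ℚ))) / (H.card : ℚ)

/-- The degree of `v`: the number of non-singleton edges of the one-inclusion graph
containing `v`. -/
def deg {n p : ℕ} (H : Finset (Fin n → Fin p)) (v : Fin n → Fin p) : ℕ :=
  (Finset.univ.filter (fun j : Fin n => 2 ≤ (edgeF H j v).card)).card

/-- The average degree of the one-inclusion graph of `H`. -/
def avd {n p : ℕ} (H : Finset (Fin n → Fin p)) : ℚ :=
  (∑ v ∈ H, (deg H v : ℚ)) / (H.card : ℚ)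


lemma mem_shift' {n p : ℕ} {i : Fin n} {H : Finset (Fin n → Fin p)} {g : Fin n → Fin p} :
    g ∈ shift i H ↔ (g i).val < (edgeF H i g).card := by
  simp [shift]

lemma card_le_of_val_lt {p : ℕ} {A B : Finset (Fin p)}
    (h : ∀ t ∈ A, (t : Fin p).val < B.card) : A.card ≤ B.card := by
  have h1 : A.card = (A.image Fin.val).card :=
    (card_image_of_injective A Fin.val_injective).symm
  rw [h1]
  have h2 : A.image Fin.val ⊆ Finset.range B.card := by
    intro x hx
    simp only [mem_image] at hx
    obtain ⟨t, ht, rfl⟩ := hx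
    exact mem_range.mpr (h t ht)
  calc (A.image Fin.val).card ≤ (Finset.range B.card).card := card_le_card h2
    _ = B.card := card_range _

lemma projF_shift_card_le {n p k : ℕ} (H : Finset (Fin n → Fin p)) (i : Fin n)
    (S : Fin k → Fin n) : (projF (shift i H) S).card ≤ (projF H S).card := by
  by_cases hcase : ∀ j, S j ≠ i
  · apply card_le_card
    intro q hq
    simp only [projF, mem_image] at hq ⊢
    obtain ⟨g, hg, rfl⟩ := hq
    rw [mem_shift'] at hg
    have hne : (edgeF H i g).Nonempty := card_pos.mp (Nat.lt_of_le_of_lt (Nat.zero_le _) hg)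
    obtain ⟨h, hh⟩ := hne
    simp only [edgeF, mem_filter] at hh
    exact ⟨h, hh.1, funext fun j => hh.2 (S j) (hcase j)⟩
  · push_neg at hcase
    obtain ⟨j₀, hj₀⟩ := hcase
    rcases (projF (shift i H) S).eq_empty_or_nonempty with he | hne
    · simp [he]
    obtain ⟨q0, hq0⟩ := hne
    have hp : 0 < p := (q0 j₀).pos
    set ρ : (Fin k → Fin p) → (Fin k → Fin p) :=
      fun q j => if S j = i then ⟨0, hp⟩ else q j with hρ
    set T := (projF H S ∪ projF (shift i H) S).image ρ with hT
    have hmapsH : ∀ x ∈ projF H S, ρ x ∈ T :=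
      fun x hx => mem_image_of_mem ρ (mem_union_left _ hx)
    have hmapssh : ∀ x ∈ projF (shift i H) S, ρ x ∈ T :=
      fun x hx => mem_image_of_mem ρ (mem_union_right _ hx)
    rw [card_eq_sum_card_fiberwise hmapssh, card_eq_sum_card_fiberwise hmapsH]
    apply sum_le_sum
    intro b _
    -- for q in any projF, the values at positions mapping to i are all equal to q j₀
    have hconst : ∀ (X : Finset (Fin n → Fin p)) (q : Fin k → Fin p), q ∈ projF X S →
        ∀ j, S j = i → q j = q j₀ := by
      intro X q hq j hj
      simp only [projF, mem_image] at hq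
      obtain ⟨g, _, rfl⟩ := hq
      simp only [hj, hj₀]
    -- injectivity of evaluation at j₀ on each fiber
    have hinj : ∀ (X : Finset (Fin n → Fin p)),
        Set.InjOn (fun q : Fin k → Fin p => q j₀) ((projF X S).filter (fun q => ρ q = b)) := by
      intro X q hq q' hq' heq
      simp only [mem_coe, mem_filter] at hq hq'
      funext j
      by_cases hj : S j = i
      · rw [hconst X q hq.1 j hj, hconst X q' hq'.1 j hj]; exact heq
      · have e1 : ρ q j = b j := congrFun hq.2 j
        have e2 : ρ q' j = b j := congrFun hq'.2 j
        simp only [hρ, if_neg hj] at e1 e2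
        rw [e1, e2]
    rw [← card_image_of_injOn (hinj (shift i H)), ← card_image_of_injOn (hinj H)]
    apply card_le_of_val_lt
    intro t ht
    simp only [mem_image, mem_filter] at ht
    obtain ⟨q, ⟨hqmem, hqb⟩, rfl⟩ := ht
    have hqmem' := hqmem
    simp only [projF, mem_image] at hqmem'
    obtain ⟨g, hg, rfl⟩ := hqmem'
    rw [mem_shift'] at hg
    rw [show ((fun j : Fin k => g (S j)) j₀) = g i from by simp only [hj₀]]
    refine lt_of_lt_of_le hg ?_
    -- card (edgeF H i g) ≤ card of image of the H-fiber under eval at j₀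
    have hedgeinj : Set.InjOn (fun h : Fin n → Fin p => h i) (edgeF H i g) := by
      intro h1 h1m h2 h2m heq
      simp only [mem_coe, edgeF, mem_filter] at h1m h2m
      funext j
      by_cases hj : j = i
      · rw [hj]; exact heq
      · rw [h1m.2 j hj, h2m.2 j hj]
    rw [← card_image_of_injOn hedgeinj]
    apply card_le_card
    intro a ha
    simp only [mem_image] at ha ⊢
    obtain ⟨h, hhm, rfl⟩ := ha
    have hhm' := hhm
    simp only [edgeF, mem_filter] at hhm'
    refine ⟨fun j => h (S j), ?_, ?_⟩
    · rw [mem_filter]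
      constructor
      · exact mem_image_of_mem _ hhm'.1
      · rw [← hqb]
        funext j
        by_cases hj : S j = i
        · simp only [hρ, if_pos hj]
        · simp only [hρ, if_neg hj]
          exact hhm'.2 (S j) hj
    · simp only [hj₀]

lemma bddAbove_EShatters {n p : ℕ} (H : Finset (Fin n → Fin p)) :
    BddAbove {k | EShatters H k} := by
  refine ⟨H.card, fun k hk => ?_⟩
  obtain ⟨S, hS⟩ := hk
  exact (Nat.lt_two_pow_self (n := k)).le.trans (hS.trans card_image_le)

/-- Shifting does not increase the exponential dimension. -/
theorem dE_shift_le {n p : ℕ} (H : Finset (Fin n → Fin p)) (i : Fin n) :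
    dE (shift i H) ≤ dE H := by
  unfold dE
  rcases Set.eq_empty_or_nonempty {k | EShatters (shift i H) k} with he | hne
  · rw [he, csSup_empty]; exact bot_le
  · refine csSup_le_csSup (bddAbove_EShatters H) hne fun k hk => ?_
    obtain ⟨S, hS⟩ := hk
    exact ⟨S, hS.trans (projF_shift_card_le H i S)⟩
end

section
/- For every finite H ⊆ [p]^n there exists an orientation of the one-inclusion graph of H with maximum out-degree at most 4·d_E(H). -/
open Finset

open scoped Classical

/-- An orientation of the one-inclusion graph of `H`. -/
structure OIOrientation {Y : Type*} {n : ℕ} (H : Set (Fin n → Y)) where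
  σ : Fin n → (Fin n → Y) → (Fin n → Y)
  mem_of_mem : ∀ (i : Fin n), ∀ h ∈ H, σ i h ∈ H
  agree : ∀ (i : Fin n), ∀ h ∈ H, ∀ j, j ≠ i → σ i h j = h j
  consistent : ∀ (i : Fin n), ∀ g ∈ H, ∀ h ∈ H, (∀ j, j ≠ i → g j = h j) → σ i g = σ i h

/-- The out-degree of a vertex `v` under the orientation. -/
noncomputable def outdeg {Y : Type*} {n : ℕ} {H : Set (Fin n → Y)}
    (o : OIOrientation H) (v : Fin n → Y) : ℕ :=
  (Finset.univ.filter (fun i : Fin n => o.σ i v ≠ v)).card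

section Aux
variable {n p : ℕ} [NeZero p]

/-- agreeing off `j` is the same as having equal `j`-zeroed versions. -/
lemma agree_iff_update {j : Fin n} {h v : Fin n → Fin p} :
    (∀ k, k ≠ j → h k = v k) ↔ Function.update h j 0 = Function.update v j 0 := by
  constructor
  · intro hag
    funext k
    by_cases hk : k = j
    · subst hk; rw [Function.update_self, Function.update_self]
    · rw [Function.update_of_ne hk, Function.update_of_ne hk, hag k hk]
  · intro he k hk
    have := congrFun he k
    rwa [Function.update_of_ne hk, Function.update_of_ne hk] at this

lemma edgeF_eq_fiber (H : Finset (Fin n → Fin p)) (j : Fin n) (v : Fin n → Fin p) :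
    edgeF H j v = H.filter (fun h => Function.update h j 0 = Function.update v j 0) := by
  unfold edgeF
  apply Finset.filter_congr
  intro h _
  exact agree_iff_update

lemma numEdges_eq_card_image (H : Finset (Fin n → Fin p)) (j : Fin n) :
    numEdges H j = (H.image (fun h => Function.update h j 0)).card := by
  unfold numEdges
  have hinj : Function.Injective
      (fun (f : {k : Fin n // k ≠ j} → Fin p) => fun k : Fin n => if hk : k = j then (0 : Fin p) else f ⟨k, hk⟩) := by
    intro f g hfg
    funext k
    have := congrFun hfg k.1
    simpa [dif_neg k.2] using this
  have himg : H.image (fun h => Function.update h j 0)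
      = (H.image (fun h => fun k : {k : Fin n // k ≠ j} => h k.1)).image
          (fun f => fun k : Fin n => if hk : k = j then 0 else f ⟨k, hk⟩) := by
    rw [Finset.image_image]
    apply Finset.image_congr
    intro h _
    funext k
    by_cases hk : k = j
    · subst hk; simp
    · simp [hk, Function.update_of_ne hk]
  rw [himg, Finset.card_image_of_injective _ hinj]

end Aux

section Aux2
variable {n p : ℕ} [NeZero p]

lemma degsum_dir_le (H : Finset (Fin n → Fin p)) (j : Fin n) :
    (H.filter (fun v => 2 ≤ (edgeF H j v).card)).card
      + 2 * (H.image (fun h => Function.update h j 0)).card ≤ 2 * H.card := by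
  classical
  set I := H.image (fun h => Function.update h j 0) with hI
  have hmem : ∀ v ∈ H, Function.update v j 0 ∈ I := fun v hv => Finset.mem_image_of_mem _ hv
  have h1 : H.card = ∑ q ∈ I, (H.filter (fun h => Function.update h j 0 = q)).card :=
    Finset.card_eq_sum_card_fiberwise hmem
  have h2 : (H.filter (fun v => 2 ≤ (edgeF H j v).card)).card
      = ∑ q ∈ I, ((H.filter (fun v => 2 ≤ (edgeF H j v).card)).filter
          (fun h => Function.update h j 0 = q)).card :=
    Finset.card_eq_sum_card_fiberwise (fun v hv => hmem v (Finset.mem_of_mem_filter _ hv))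
  have key : ∀ q ∈ I, ((H.filter (fun v => 2 ≤ (edgeF H j v).card)).filter
        (fun h => Function.update h j 0 = q)).card + 2
      ≤ 2 * (H.filter (fun h => Function.update h j 0 = q)).card := by
    intro q hq
    obtain ⟨v, hv, rfl⟩ := Finset.mem_image.mp hq
    set c := (H.filter (fun h => Function.update h j 0 = Function.update v j 0)).card with hc
    have hc1 : 1 ≤ c := by
      apply Finset.card_pos.mpr
      exact ⟨v, Finset.mem_filter.mpr ⟨hv, rfl⟩⟩
    have hedge : ∀ h ∈ H, Function.update h j 0 = Function.update v j 0 →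
        (edgeF H j h).card = c := by
      intro h hh hhq
      rw [edgeF_eq_fiber]
      congr 1
      apply Finset.filter_congr
      intro x _
      rw [hhq]
    by_cases h2c : 2 ≤ c
    · have : ((H.filter (fun v' => 2 ≤ (edgeF H j v').card)).filter
          (fun h => Function.update h j 0 = Function.update v j 0))
          = H.filter (fun h => Function.update h j 0 = Function.update v j 0) := by
        ext h
        simp only [Finset.mem_filter, and_assoc]
        constructor
        · rintro ⟨hh, _, hq⟩; exact ⟨hh, hq⟩
        · rintro ⟨hh, hq⟩
          exact ⟨hh, by rw [hedge h hh hq]; exact h2c, hq⟩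
      rw [this]
      omega
    · have : ((H.filter (fun v' => 2 ≤ (edgeF H j v').card)).filter
          (fun h => Function.update h j 0 = Function.update v j 0)) = ∅ := by
        apply Finset.eq_empty_of_forall_notMem
        intro h hh
        simp only [Finset.mem_filter, and_assoc] at hh
        obtain ⟨hhH, h2, hq⟩ := hh
        rw [hedge h hhH hq] at h2
        omega
      rw [this]
      simp
      omega
  calc (H.filter (fun v => 2 ≤ (edgeF H j v).card)).card + 2 * I.card
      = ∑ q ∈ I, (((H.filter (fun v => 2 ≤ (edgeF H j v).card)).filter
          (fun h => Function.update h j 0 = q)).card + 2) := by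
        rw [Finset.sum_add_distrib, ← h2, Finset.sum_const, smul_eq_mul]
        ring
    _ ≤ ∑ q ∈ I, 2 * (H.filter (fun h => Function.update h j 0 = q)).card :=
        Finset.sum_le_sum key
    _ = 2 * H.card := by rw [← Finset.mul_sum, ← h1]

lemma sum_deg_le (H : Finset (Fin n → Fin p)) :
    ∑ v ∈ H, deg H v + 2 * ∑ j : Fin n, numEdges H j ≤ 2 * (n * H.card) := by
  classical
  have hswap : ∑ v ∈ H, deg H v
      = ∑ j : Fin n, (H.filter (fun v => 2 ≤ (edgeF H j v).card)).card := by
    unfold deg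
    simp only [Finset.card_filter]
    exact Finset.sum_comm
  rw [hswap]
  have := fun j => degsum_dir_le H j
  calc ∑ j : Fin n, (H.filter (fun v => 2 ≤ (edgeF H j v).card)).card
        + 2 * ∑ j : Fin n, numEdges H j
      = ∑ j : Fin n, ((H.filter (fun v => 2 ≤ (edgeF H j v).card)).card
          + 2 * (H.image (fun h => Function.update h j 0)).card) := by
        rw [Finset.sum_add_distrib, Finset.mul_sum]
        congr 1
        apply Finset.sum_congr rfl
        intro j _
        rw [numEdges_eq_card_image]
    _ ≤ ∑ _j : Fin n, 2 * H.card := Finset.sum_le_sum (fun j _ => degsum_dir_le H j)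
    _ = 2 * (n * H.card) := by
        rw [Finset.sum_const, Finset.card_univ, Fintype.card_fin, smul_eq_mul]
        ring

end Aux2

section Aux3
variable {n p : ℕ}

lemma eshatters_le_card {H : Finset (Fin n → Fin p)} {k : ℕ} (h : EShatters H k) :
    k < H.card := by
  obtain ⟨S, hS⟩ := h
  have h1 : (projF H S).card ≤ H.card := Finset.card_image_le
  have h2 : k < 2 ^ k := Nat.lt_two_pow_self
  omega

lemma bddAbove_shatters (H : Finset (Fin n → Fin p)) : BddAbove {k | EShatters H k} :=
  ⟨H.card, fun _ hk => le_of_lt (eshatters_le_card hk)⟩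

lemma le_dE {H : Finset (Fin n → Fin p)} {k : ℕ} (h : EShatters H k) : k ≤ dE H :=
  le_csSup (bddAbove_shatters H) h

lemma eshatters_zero {H : Finset (Fin n → Fin p)} (hH : H.Nonempty) : EShatters H 0 := by
  refine ⟨fun i => i.elim0, ?_⟩
  rw [pow_zero]
  apply Finset.card_pos.mpr
  unfold projF
  exact hH.image _

lemma dE_shatters {H : Finset (Fin n → Fin p)} (hH : H.Nonempty) : EShatters H (dE H) := by
  have h0 : (0 : ℕ) ∈ {k | EShatters H k} := eshatters_zero hH
  have h := Nat.sSup_mem ⟨0, h0⟩ (bddAbove_shatters H)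
  exact h

lemma dE_empty : dE (∅ : Finset (Fin n → Fin p)) = 0 := by
  have : {k | EShatters (∅ : Finset (Fin n → Fin p)) k} = ∅ := by
    apply Set.eq_empty_of_forall_notMem
    intro k hk
    obtain ⟨S, hS⟩ := hk
    simp [projF] at hS
  rw [dE, this, csSup_empty]
  rfl

lemma dE_mono {H' H : Finset (Fin n → Fin p)} (hsub : H' ⊆ H) : dE H' ≤ dE H := by
  rcases H'.eq_empty_or_nonempty with rfl | hne
  · simp [dE_empty]
  · obtain ⟨S, hS⟩ := dE_shatters hne
    apply le_dE
    refine ⟨S, le_trans hS (Finset.card_le_card ?_)⟩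
    exact Finset.image_subset_image hsub

end Aux3

section Aux4
set_option linter.unusedSectionVars false
variable {n p : ℕ} [NeZero p]

/-- The set of last-coordinate extensions of `g` inside `H`. -/
def fiberSet (H : Finset (Fin (n+1) → Fin p)) (g : Fin n → Fin p) : Finset (Fin p) :=
  Finset.univ.filter (fun t => Fin.snoc g t ∈ H)

/-- The `k`-th layer: projections with at least `k+1` extensions. -/
def Tk (H : Finset (Fin (n+1) → Fin p)) (k : ℕ) : Finset (Fin n → Fin p) :=
  (H.image Fin.init).filter (fun g => k + 1 ≤ (fiberSet H g).card)

lemma update_snoc (g : Fin n → Fin p) (t : Fin p) (j : Fin n) :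
    Function.update (Fin.snoc g t) j.castSucc 0 = (Fin.snoc (Function.update g j 0) t : Fin (n+1) → Fin p) := by
  funext i
  refine Fin.lastCases ?_ (fun i0 => ?_) i
  · rw [Function.update_of_ne (Fin.castSucc_lt_last j).ne', Fin.snoc_last, Fin.snoc_last]
  · by_cases hij : i0 = j
    · subst hij
      rw [Function.update_self, Fin.snoc_castSucc, Function.update_self]
    · rw [Function.update_of_ne (fun hc => hij (Fin.castSucc_injective n hc)),
        Fin.snoc_castSucc, Fin.snoc_castSucc, Function.update_of_ne hij]

lemma mem_image_init {H : Finset (Fin (n+1) → Fin p)} {g : Fin n → Fin p}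
    (hg : g ∈ H.image Fin.init) : 1 ≤ (fiberSet H g).card := by
  obtain ⟨h, hh, rfl⟩ := Finset.mem_image.mp hg
  apply Finset.card_pos.mpr
  refine ⟨h (Fin.last n), ?_⟩
  unfold fiberSet
  rw [Finset.mem_filter]
  exact ⟨Finset.mem_univ _, by rw [Fin.snoc_init_self]; exact hh⟩

lemma Tk_zero (H : Finset (Fin (n+1) → Fin p)) : Tk H 0 = H.image Fin.init := by
  unfold Tk
  apply Finset.filter_true_of_mem
  intro g hg
  simpa using mem_image_init hg

lemma card_eq_sum_fiber (H : Finset (Fin (n+1) → Fin p)) :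
    H.card = ∑ g ∈ H.image Fin.init, (fiberSet H g).card := by
  classical
  rw [Finset.card_eq_sum_card_fiberwise (f := Fin.init) (t := H.image Fin.init)
    (fun x hx => Finset.mem_image_of_mem _ hx)]
  apply Finset.sum_congr rfl
  intro g hg
  apply Finset.card_bij (i := fun h _ => h (Fin.last n))
  · intro h hh
    obtain ⟨hhH, hinit⟩ := Finset.mem_filter.mp hh
    unfold fiberSet
    rw [Finset.mem_filter]
    refine ⟨Finset.mem_univ _, ?_⟩
    rw [← hinit, Fin.snoc_init_self]
    exact hhH
  · intro h1 hh1 h2 hh2 hlast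
    obtain ⟨_, hi1⟩ := Finset.mem_filter.mp hh1
    obtain ⟨_, hi2⟩ := Finset.mem_filter.mp hh2
    rw [← Fin.snoc_init_self h1, ← Fin.snoc_init_self h2, hi1, hi2, hlast]
  · intro t ht
    have htH : Fin.snoc g t ∈ H := (Finset.mem_filter.mp ht).2
    refine ⟨Fin.snoc g t, ?_, ?_⟩
    · rw [Finset.mem_filter]
      exact ⟨htH, Fin.init_snoc _ _⟩
    · rw [Fin.snoc_last]

lemma fiberSet_card_le (H : Finset (Fin (n+1) → Fin p)) (g : Fin n → Fin p) :
    (fiberSet H g).card ≤ p := by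
  calc (fiberSet H g).card ≤ (Finset.univ : Finset (Fin p)).card := Finset.card_filter_le _ _
    _ = p := by rw [Finset.card_univ, Fintype.card_fin]

lemma card_eq_sum_Tk (H : Finset (Fin (n+1) → Fin p)) :
    H.card = ∑ k ∈ Finset.range p, (Tk H k).card := by
  classical
  rw [card_eq_sum_fiber]
  unfold Tk
  have : ∀ k, (Finset.filter (fun g => k + 1 ≤ (fiberSet H g).card) (H.image Fin.init)).card
      = ∑ g ∈ H.image Fin.init, if k + 1 ≤ (fiberSet H g).card then 1 else 0 := by
    intro k
    rw [Finset.card_filter]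
  simp only [this]
  rw [Finset.sum_comm]
  apply Finset.sum_congr rfl
  intro g hg
  have hle := fiberSet_card_le H g
  have hfil : (Finset.range p).filter (fun k => k + 1 ≤ (fiberSet H g).card)
      = Finset.range ((fiberSet H g).card) := by
    ext a
    simp only [Finset.mem_filter, Finset.mem_range]
    omega
  rw [← Finset.card_filter, hfil, Finset.card_range]

lemma card_image_update_last (H : Finset (Fin (n+1) → Fin p)) :
    (H.image (fun h => Function.update h (Fin.last n) 0)).card = (Tk H 0).card := by
  classical
  rw [Tk_zero]
  have himg : H.image (fun h => Function.update h (Fin.last n) 0)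
      = (H.image Fin.init).image (fun g => Fin.snoc g 0) := by
    rw [Finset.image_image]
    apply Finset.image_congr
    intro h _
    show Function.update h (Fin.last n) 0 = Fin.snoc (Fin.init h) (0 : Fin p)
    funext i
    refine Fin.lastCases ?_ (fun i0 => ?_) i
    · rw [Function.update_self]
      simp [Fin.snoc_last]
    · rw [Function.update_of_ne (Fin.castSucc_lt_last i0).ne]
      simp [Fin.snoc_castSucc, Fin.init]
  rw [himg, Finset.card_image_of_injective]
  intro g g' hgg
  have := congrArg Fin.init hgg
  rwa [Fin.init_snoc, Fin.init_snoc] at this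

end Aux4

section Aux5
set_option linter.unusedSectionVars false
variable {n p : ℕ} [NeZero p]

lemma sum_Tk_image_le (H : Finset (Fin (n+1) → Fin p)) (j : Fin n) :
    ∑ k ∈ Finset.range p, ((Tk H k).image (fun g => Function.update g j 0)).card
      ≤ (H.image (fun h => Function.update h j.castSucc 0)).card := by
  classical
  set I := H.image (fun h => Function.update h j.castSucc 0) with hIdef
  set U : (Fin n → Fin p) → Finset (Fin p) :=
    fun q => Finset.univ.filter (fun t => (Fin.snoc q t : Fin (n+1) → Fin p) ∈ I) with hU
  have hUcard : ∀ k, ∀ q ∈ (Tk H k).image (fun g => Function.update g j 0),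
      k + 1 ≤ (U q).card := by
    intro k q hq
    obtain ⟨g, hg, rfl⟩ := Finset.mem_image.mp hq
    obtain ⟨hgI, hmg⟩ := Finset.mem_filter.mp hg
    refine le_trans hmg (Finset.card_le_card ?_)
    intro t ht
    have htH : (Fin.snoc g t : Fin (n+1) → Fin p) ∈ H := (Finset.mem_filter.mp ht).2
    simp only [hU, Finset.mem_filter, Finset.mem_univ, true_and]
    rw [← update_snoc]
    exact Finset.mem_image_of_mem _ htH
  set s : ℕ → (Fin n → Fin p) → Fin p := fun k q =>
    if h : k < (U q).card then (((U q).orderIsoOfFin rfl) ⟨k, h⟩ : Fin p) else 0 with hs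
  have hsmem : ∀ k q, k < (U q).card → s k q ∈ U q := by
    intro k q hk
    rw [hs]
    simp only [dif_pos hk]
    exact (((U q).orderIsoOfFin rfl) ⟨k, hk⟩).2
  have hsinj : ∀ k l q, k < (U q).card → l < (U q).card → s k q = s l q → k = l := by
    intro k l q hk hl hkl
    rw [hs] at hkl
    simp only [dif_pos hk, dif_pos hl] at hkl
    have := ((U q).orderIsoOfFin rfl).injective (Subtype.ext hkl)
    exact congrArg Fin.val this
  set B : ℕ → Finset (Fin (n+1) → Fin p) := fun k =>
    ((Tk H k).image (fun g => Function.update g j 0)).image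
      (fun q => (Fin.snoc q (s k q) : Fin (n+1) → Fin p)) with hB
  have hBcard : ∀ k, (B k).card = ((Tk H k).image (fun g => Function.update g j 0)).card := by
    intro k
    apply Finset.card_image_of_injOn
    intro q _ q' _ heq
    have := congrArg Fin.init heq
    rwa [Fin.init_snoc, Fin.init_snoc] at this
  have hBsub : ∀ k, B k ⊆ I := by
    intro k x hx
    obtain ⟨q, hq, rfl⟩ := Finset.mem_image.mp hx
    have hmem := hsmem k q (lt_of_lt_of_le (Nat.lt_succ_self k) (hUcard k q hq))
    exact (Finset.mem_filter.mp hmem).2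
  have hdisj : ∀ k ∈ Finset.range p, ∀ l ∈ Finset.range p, k ≠ l → Disjoint (B k) (B l) := by
    intro k _ l _ hkl
    rw [Finset.disjoint_left]
    intro x hxk hxl
    obtain ⟨q, hq, rfl⟩ := Finset.mem_image.mp hxk
    obtain ⟨q', hq', heq⟩ := Finset.mem_image.mp hxl
    have hqq : q' = q := by
      have := congrArg Fin.init heq
      rwa [Fin.init_snoc, Fin.init_snoc] at this
    subst hqq
    have hlast := congrArg (fun f => f (Fin.last n)) heq
    simp only [Fin.snoc_last] at hlast
    exact hkl ((hsinj l k q'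
      (lt_of_lt_of_le (Nat.lt_succ_self l) (hUcard l q' hq'))
      (lt_of_lt_of_le (Nat.lt_succ_self k) (hUcard k q' hq)) hlast).symm)
  calc ∑ k ∈ Finset.range p, ((Tk H k).image (fun g => Function.update g j 0)).card
      = ∑ k ∈ Finset.range p, (B k).card := by
        exact Finset.sum_congr rfl (fun k _ => (hBcard k).symm)
    _ = ((Finset.range p).biUnion B).card := (Finset.card_biUnion hdisj).symm
    _ ≤ I.card := Finset.card_le_card (Finset.biUnion_subset.mpr (fun k _ => hBsub k))

lemma eshatters_init {H : Finset (Fin (n+1) → Fin p)} {k' : ℕ}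
    (h : EShatters (H.image Fin.init) k') : EShatters H k' := by
  obtain ⟨S, hS⟩ := h
  refine ⟨fun i => (S i).castSucc, ?_⟩
  have : projF (H.image Fin.init) S = projF H (fun i => (S i).castSucc) := by
    unfold projF
    rw [Finset.image_image]
    apply Finset.image_congr
    intro h _
    funext i
    simp [Fin.init]
  rwa [this] at hS

lemma eshatters_Tk {H : Finset (Fin (n+1) → Fin p)} {k k' : ℕ} (hk : 1 ≤ k)
    (h : EShatters (Tk H k) k') : EShatters H (k' + 1) := by
  classical
  obtain ⟨S, hS⟩ := h
  set S' : Fin (k' + 1) → Fin (n + 1) :=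
    Fin.snoc (fun i => (S i).castSucc) (Fin.last n) with hS'
  refine ⟨S', ?_⟩
  set P := projF (Tk H k) S with hP
  have hch : ∀ r ∈ P, ∃ g, g ∈ Tk H k ∧ (fun i => g (S i)) = r := by
    intro r hr
    obtain ⟨g, hg, hgr⟩ := Finset.mem_image.mp hr
    exact ⟨g, hg, hgr⟩
  choose G hGmem hGr using hch
  set B : {r // r ∈ P} → Finset (Fin (k'+1) → Fin p) :=
    fun r => (fiberSet H (G r.1 r.2)).image (fun t => (Fin.snoc r.1 t : Fin (k'+1) → Fin p))
    with hB
  have hsub : P.attach.biUnion B ⊆ projF H S' := by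
    intro x hx
    obtain ⟨⟨r, hr⟩, _, hxB⟩ := Finset.mem_biUnion.mp hx
    obtain ⟨t, ht, rfl⟩ := Finset.mem_image.mp hxB
    have htH : (Fin.snoc (G r hr) t : Fin (n+1) → Fin p) ∈ H := (Finset.mem_filter.mp ht).2
    refine Finset.mem_image.mpr ⟨Fin.snoc (G r hr) t, htH, ?_⟩
    funext i
    refine Fin.lastCases ?_ (fun i0 => ?_) i
    · simp only [hS', Fin.snoc_last]
    · simp only [hS', Fin.snoc_castSucc]
      exact congrFun (hGr r hr) i0
  have hdisj : ∀ x ∈ P.attach, ∀ y ∈ P.attach, x ≠ y → Disjoint (B x) (B y) := by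
    intro x _ y _ hxy
    refine Finset.disjoint_left.mpr (fun a hax hay => hxy ?_)
    obtain ⟨t, _, rfl⟩ := Finset.mem_image.mp hax
    obtain ⟨t', _, heq⟩ := Finset.mem_image.mp hay
    have := congrArg Fin.init heq
    rw [Fin.init_snoc, Fin.init_snoc] at this
    exact Subtype.ext this.symm
  have hBcard : ∀ r : {r // r ∈ P}, 2 ≤ (B r).card := by
    intro r
    simp only [hB]
    rw [Finset.card_image_of_injective]
    · have hmg := (Finset.mem_filter.mp (hGmem r.1 r.2)).2
      omega
    · intro t t' htt
      have := congrArg (fun f => f (Fin.last k')) htt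
      simpa [Fin.snoc_last] using this
  calc 2 ^ (k' + 1) = 2 * 2 ^ k' := by ring
    _ ≤ 2 * P.card := by omega
    _ = ∑ _r ∈ P.attach, 2 := by
        rw [Finset.sum_const, Finset.card_attach, smul_eq_mul, mul_comm]
    _ ≤ ∑ r ∈ P.attach, (B r).card := Finset.sum_le_sum (fun r _ => hBcard r)
    _ = (P.attach.biUnion B).card := (Finset.card_biUnion hdisj).symm
    _ ≤ (projF H S').card := Finset.card_le_card hsub

lemma dE_T0_le (H : Finset (Fin (n+1) → Fin p)) : dE (Tk H 0) ≤ dE H := by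
  rcases (Tk H 0).eq_empty_or_nonempty with he | hne
  · rw [he, dE_empty]; exact Nat.zero_le _
  · apply le_dE
    apply eshatters_init
    rw [← Tk_zero]
    exact dE_shatters hne

lemma dE_Tk_lt (H : Finset (Fin (n+1) → Fin p)) {k : ℕ} (hk : 1 ≤ k)
    (hne : (Tk H k).Nonempty) : dE (Tk H k) + 1 ≤ dE H :=
  le_dE (eshatters_Tk hk (dE_shatters hne))

end Aux5

section Aux6
set_option linter.unusedSectionVars false
variable {p : ℕ} [NeZero p]

lemma core : ∀ (m : ℕ) (H : Finset (Fin m → Fin p)),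
    m * H.card ≤ 2 * dE H * H.card
      + ∑ j : Fin m, (H.image (fun h => Function.update h j 0)).card := by
  intro m
  induction m with
  | zero => intro H; simp
  | succ n ih =>
    intro H
    rcases H.eq_empty_or_nonempty with rfl | hne
    · simp
    · set d := dE H with hd
      have hppos : 0 < p := Nat.pos_of_ne_zero (NeZero.ne p)
      have key : ∀ k ∈ Finset.range p,
          n * (Tk H k).card + (Tk H k).card ≤ 2 * d * (Tk H k).card
            + (∑ j : Fin n, ((Tk H k).image (fun g => Function.update g j 0)).card)
            + (if k = 0 then (Tk H 0).card else 0) := by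
        intro k _
        rcases Nat.eq_zero_or_pos k with rfl | hk
        · rw [if_pos rfl]
          have h1 := ih (Tk H 0)
          have h2 : dE (Tk H 0) ≤ d := dE_T0_le H
          have h3 : 2 * dE (Tk H 0) * (Tk H 0).card ≤ 2 * d * (Tk H 0).card :=
            Nat.mul_le_mul_right _ (by omega)
          linarith
        · rcases (Tk H k).eq_empty_or_nonempty with he | hneT
          · rw [he]; simp
          · have h1 := ih (Tk H k)
            have h2 : dE (Tk H k) + 1 ≤ d := dE_Tk_lt H hk hneT
            have h3 : 2 * dE (Tk H k) * (Tk H k).card + (Tk H k).card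
                ≤ 2 * d * (Tk H k).card := by
              calc 2 * dE (Tk H k) * (Tk H k).card + (Tk H k).card
                  = (2 * dE (Tk H k) + 1) * (Tk H k).card := by ring
                _ ≤ 2 * d * (Tk H k).card := Nat.mul_le_mul_right _ (by omega)
            have : ¬ k = 0 := by omega
            simp only [if_neg this, add_zero]
            linarith
      have hsum := Finset.sum_le_sum key
      have hL : ∑ k ∈ Finset.range p, (n * (Tk H k).card + (Tk H k).card)
          = (n + 1) * H.card := by
        rw [card_eq_sum_Tk H, Finset.mul_sum]
        apply Finset.sum_congr rfl
        intro k _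
        ring
      have hR : ∑ k ∈ Finset.range p, (2 * d * (Tk H k).card
            + (∑ j : Fin n, ((Tk H k).image (fun g => Function.update g j 0)).card)
            + (if k = 0 then (Tk H 0).card else 0))
          = 2 * d * H.card
            + ∑ k ∈ Finset.range p,
                (∑ j : Fin n, ((Tk H k).image (fun g => Function.update g j 0)).card)
            + (Tk H 0).card := by
        rw [Finset.sum_add_distrib, Finset.sum_add_distrib, ← Finset.mul_sum,
          ← card_eq_sum_Tk H]
        congr 1
        rw [Finset.sum_ite_eq' (Finset.range p) 0 (fun _ => (Tk H 0).card)]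
        simp [Finset.mem_range, hppos]
      have hswap : ∑ k ∈ Finset.range p,
            (∑ j : Fin n, ((Tk H k).image (fun g => Function.update g j 0)).card)
          ≤ ∑ j : Fin n, (H.image (fun h => Function.update h j.castSucc 0)).card := by
        rw [Finset.sum_comm]
        exact Finset.sum_le_sum (fun j _ => sum_Tk_image_le H j)
      have hfin : ∑ j : Fin (n+1), (H.image (fun h => Function.update h j 0)).card
          = (∑ j : Fin n, (H.image (fun h => Function.update h j.castSucc 0)).card)
            + (Tk H 0).card := by
        rw [Fin.sum_univ_castSucc]
        congr 1
        exact card_image_update_last H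
      rw [hL, hR] at hsum
      rw [hfin]
      omega

lemma core' {n : ℕ} (H : Finset (Fin n → Fin p)) :
    n * H.card ≤ 2 * dE H * H.card + ∑ j : Fin n, numEdges H j := by
  have h := core n H
  have heq : ∑ j : Fin n, numEdges H j
      = ∑ j : Fin n, (H.image (fun h => Function.update h j 0)).card :=
    Finset.sum_congr rfl (fun j _ => numEdges_eq_card_image H j)
  rw [heq]
  exact h

lemma exists_low_deg {n : ℕ} (H : Finset (Fin n → Fin p)) (hne : H.Nonempty) :
    ∃ v ∈ H, deg H v ≤ 4 * dE H := by
  by_contra hc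
  push_neg at hc
  have hlb : ∀ v ∈ H, 4 * dE H + 1 ≤ deg H v := fun v hv => hc v hv
  have hsum' : H.card * (4 * dE H + 1) ≤ ∑ v ∈ H, deg H v := by
    have := Finset.card_nsmul_le_sum H (fun v => deg H v) (4 * dE H + 1) hlb
    simpa [smul_eq_mul] using this
  have h1 := sum_deg_le H
  have h2 := core' H
  have hcard : 1 ≤ H.card := Finset.card_pos.mpr hne
  linarith

end Aux6

section Greedy
variable {n p : ℕ}

lemma mem_edgeF_self {H : Finset (Fin n → Fin p)} {i : Fin n} {g : Fin n → Fin p}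
    (hg : g ∈ H) : g ∈ edgeF H i g :=
  Finset.mem_filter.mpr ⟨hg, fun _ _ => rfl⟩

lemma edgeF_congr {H : Finset (Fin n → Fin p)} {i : Fin n} {g h : Fin n → Fin p}
    (hag : ∀ j, j ≠ i → g j = h j) : edgeF H i g = edgeF H i h := by
  unfold edgeF
  apply Finset.filter_congr
  intro x _
  constructor
  · intro hx j hj
    rw [hx j hj]
    exact hag j hj
  · intro hx j hj
    rw [hx j hj]
    exact (hag j hj).symm

lemma agree_of_mem_edgeF {H : Finset (Fin n → Fin p)} {i : Fin n} {g w : Fin n → Fin p}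
    (hw : w ∈ edgeF H i g) : ∀ j, j ≠ i → w j = g j :=
  (Finset.mem_filter.mp hw).2

lemma mem_of_mem_edgeF {H : Finset (Fin n → Fin p)} {i : Fin n} {g w : Fin n → Fin p}
    (hw : w ∈ edgeF H i g) : w ∈ H :=
  (Finset.mem_filter.mp hw).1

lemma orient_empty :
    ∃ o : OIOrientation ((∅ : Finset (Fin n → Fin p)) : Set (Fin n → Fin p)),
      ∀ v ∈ (∅ : Finset (Fin n → Fin p)), outdeg o v ≤ 4 * dE (∅ : Finset (Fin n → Fin p)) :=
  ⟨⟨fun _ h => h, fun i h hh => hh, fun _ _ _ _ _ => rfl,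
    fun i g hg h hh hag => absurd hg (by simp)⟩, by simp⟩

lemma greedy [NeZero p] : ∀ (N : ℕ) (H : Finset (Fin n → Fin p)), H.card ≤ N →
    ∃ o : OIOrientation (H : Set (Fin n → Fin p)), ∀ v ∈ H, outdeg o v ≤ 4 * dE H := by
  intro N
  induction N with
  | zero =>
    intro H hH
    have : H = ∅ := Finset.card_eq_zero.mp (Nat.le_zero.mp hH)
    subst this
    exact orient_empty
  | succ N ihN =>
    intro H hcard
    rcases H.eq_empty_or_nonempty with rfl | hne
    · exact orient_empty
    obtain ⟨v, hv, hdeg⟩ := exists_low_deg H hne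
    set H' := H.erase v with hH'
    have hsub : H' ⊆ H := Finset.erase_subset _ _
    have hcard' : H'.card ≤ N := by
      have h1 : H'.card < H.card := Finset.card_erase_lt_of_mem hv
      omega
    obtain ⟨o', ho'⟩ := ihN H' hcard'
    classical
    set σf : Fin n → (Fin n → Fin p) → (Fin n → Fin p) := fun i h =>
      if hc : h ∈ H ∧ ((edgeF H i h).erase v).Nonempty
      then o'.σ i hc.2.choose else h with hσf
    have hwprop : ∀ (i : Fin n) (h : Fin n → Fin p)
        (hc : h ∈ H ∧ ((edgeF H i h).erase v).Nonempty),
        hc.2.choose ∈ H' ∧ (∀ j, j ≠ i → hc.2.choose j = h j) := by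
      intro i h hc
      have hch := hc.2.choose_spec
      obtain ⟨hne_v, hmem⟩ := Finset.mem_erase.mp hch
      exact ⟨Finset.mem_erase.mpr ⟨hne_v, mem_of_mem_edgeF hmem⟩, agree_of_mem_edgeF hmem⟩
    have hmem : ∀ (i : Fin n), ∀ h ∈ (H : Set (Fin n → Fin p)), σf i h ∈ (H : Set (Fin n → Fin p)) := by
      intro i h hh
      show (if hc : h ∈ H ∧ ((edgeF H i h).erase v).Nonempty
        then o'.σ i hc.2.choose else h) ∈ (H : Set (Fin n → Fin p))
      by_cases hc : h ∈ H ∧ ((edgeF H i h).erase v).Nonempty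
      · rw [dif_pos hc]
        have hw := (hwprop i h hc).1
        exact Finset.mem_coe.mpr (hsub (Finset.mem_coe.mp (o'.mem_of_mem i _ (Finset.mem_coe.mpr hw))))
      · rw [dif_neg hc]; exact hh
    have hagree : ∀ (i : Fin n), ∀ h ∈ (H : Set (Fin n → Fin p)), ∀ j, j ≠ i → σf i h j = h j := by
      intro i h hh j hj
      show (if hc : h ∈ H ∧ ((edgeF H i h).erase v).Nonempty
        then o'.σ i hc.2.choose else h) j = h j
      by_cases hc : h ∈ H ∧ ((edgeF H i h).erase v).Nonempty
      · rw [dif_pos hc]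
        obtain ⟨hw', hwag⟩ := hwprop i h hc
        rw [o'.agree i _ (Finset.mem_coe.mpr hw') j hj]
        exact hwag j hj
      · rw [dif_neg hc]
    have hcons : ∀ (i : Fin n), ∀ g ∈ (H : Set (Fin n → Fin p)),
        ∀ h ∈ (H : Set (Fin n → Fin p)), (∀ j, j ≠ i → g j = h j) → σf i g = σf i h := by
      intro i g hg h hh hag
      have hgH : g ∈ H := Finset.mem_coe.mp hg
      have hhH : h ∈ H := Finset.mem_coe.mp hh
      have hedge : edgeF H i g = edgeF H i h := edgeF_congr hag
      show (if hc : g ∈ H ∧ ((edgeF H i g).erase v).Nonempty then o'.σ i hc.2.choose else g)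
        = (if hc : h ∈ H ∧ ((edgeF H i h).erase v).Nonempty then o'.σ i hc.2.choose else h)
      by_cases hgne : ((edgeF H i g).erase v).Nonempty
      · have hhne : ((edgeF H i h).erase v).Nonempty := by rwa [hedge] at hgne
        have cg : g ∈ H ∧ ((edgeF H i g).erase v).Nonempty := ⟨hgH, hgne⟩
        have ch : h ∈ H ∧ ((edgeF H i h).erase v).Nonempty := ⟨hhH, hhne⟩
        rw [dif_pos cg, dif_pos ch]
        obtain ⟨hwg', hwgag⟩ := hwprop i g cg
        obtain ⟨hwh', hwhag⟩ := hwprop i h ch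
        apply o'.consistent i _ (Finset.mem_coe.mpr hwg') _ (Finset.mem_coe.mpr hwh')
        intro j hj
        rw [hwgag j hj, hwhag j hj]
        exact hag j hj
      · have hhne : ¬ ((edgeF H i h).erase v).Nonempty := by rwa [hedge] at hgne
        rw [dif_neg (fun hc => hgne hc.2), dif_neg (fun hc => hhne hc.2)]
        have hgv : g = v := by
          by_contra hgv
          exact hgne ⟨g, Finset.mem_erase.mpr ⟨hgv, mem_edgeF_self hgH⟩⟩
        have hhv : h = v := by
          by_contra hhv
          exact hhne ⟨h, Finset.mem_erase.mpr ⟨hhv, mem_edgeF_self hhH⟩⟩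
        rw [hgv, hhv]
    refine ⟨⟨σf, hmem, hagree, hcons⟩, ?_⟩
    intro u hu
    set o : OIOrientation (H : Set (Fin n → Fin p)) := ⟨σf, hmem, hagree, hcons⟩ with ho
    by_cases huv : u = v
    · subst huv
      unfold outdeg
      refine le_trans (Finset.card_le_card ?_) hdeg
      intro i hi
      simp only [Finset.mem_filter] at hi
      have hi2 : o.σ i u ≠ u := hi.2
      refine Finset.mem_filter.mpr ⟨Finset.mem_univ _, ?_⟩
      by_cases hc : u ∈ H ∧ ((edgeF H i u).erase u).Nonempty
      · obtain ⟨w, hw⟩ := hc.2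
        obtain ⟨hwv, hwmem⟩ := Finset.mem_erase.mp hw
        exact Finset.one_lt_card.mpr ⟨w, hwmem, u, mem_edgeF_self hu, hwv⟩
      · exfalso
        apply hi2
        show σf i u = u
        show (if hc : u ∈ H ∧ ((edgeF H i u).erase u).Nonempty
          then o'.σ i hc.2.choose else u) = u
        rw [dif_neg hc]
    · have hu' : u ∈ H' := Finset.mem_erase.mpr ⟨huv, hu⟩
      have hceq : ∀ i : Fin n, σf i u = o'.σ i u := by
        intro i
        have hc : u ∈ H ∧ ((edgeF H i u).erase v).Nonempty :=
          ⟨hu, ⟨u, Finset.mem_erase.mpr ⟨huv, mem_edgeF_self hu⟩⟩⟩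
        show (if hc : u ∈ H ∧ ((edgeF H i u).erase v).Nonempty
          then o'.σ i hc.2.choose else u) = o'.σ i u
        rw [dif_pos hc]
        obtain ⟨hw', hwag⟩ := hwprop i u hc
        exact o'.consistent i _ (Finset.mem_coe.mpr hw') u (Finset.mem_coe.mpr hu') hwag
      have hueq : outdeg o u = outdeg o' u := by
        unfold outdeg
        congr 1
        ext i
        simp only [Finset.mem_filter, Finset.mem_univ, true_and]
        constructor
        · intro h2
          have h2' : σf i u ≠ u := h2
          rw [hceq i] at h2'
          exact h2'
        · intro h2
          show σf i u ≠ u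
          rw [hceq i]
          exact h2
      rw [hueq]
      exact le_trans (ho' u hu') (Nat.mul_le_mul_left _ (dE_mono hsub))

lemma orient_p0 {m : ℕ} (H : Finset (Fin m → Fin 0)) :
    ∃ o : OIOrientation (H : Set (Fin m → Fin 0)), ∀ v ∈ H, outdeg o v ≤ 4 * dE H := by
  refine ⟨⟨fun _ h => h, fun i h hh => hh, fun _ _ _ _ _ => rfl,
    fun i g hg h hh hag => (g i).elim0⟩, ?_⟩
  intro u hu
  set o : OIOrientation (H : Set (Fin m → Fin 0)) := ⟨fun _ h => h, fun i h hh => hh,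
    fun _ _ _ _ _ => rfl, fun i g hg h hh hag => (g i).elim0⟩ with ho
  have h0 : outdeg o u = 0 := by
    unfold outdeg
    apply Finset.card_eq_zero.mpr
    apply Finset.eq_empty_of_forall_notMem
    intro i hi
    simp only [Finset.mem_filter] at hi
    exact hi.2 rfl
  rw [h0]
  exact Nat.zero_le _

end Greedy

theorem exists_orientation_outdeg_le_four_dE' {n p : ℕ} (H : Finset (Fin n → Fin p)) :
    ∃ o : OIOrientation (H : Set (Fin n → Fin p)), ∀ v ∈ H, outdeg o v ≤ 4 * dE H := by
  rcases p with _ | p'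
  · exact orient_p0 H
  · exact greedy H.card H le_rfl

/-- Every finite `H ⊆ [p]^n` admits an orientation of its one-inclusion graph
with maximum out-degree at most `4·d_E(H)`. -/
theorem exists_orientation_outdeg_le_four_dE {n p : ℕ} (H : Finset (Fin n → Fin p)) :
    ∃ o : OIOrientation (H : Set (Fin n → Fin p)), ∀ v ∈ H, outdeg o v ≤ 4 * dE H := by
  rcases p with _ | p'
  · exact orient_p0 H
  · exact greedy H.card H le_rfl
end
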